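/- There exist ε > 0 and C > 0 such that: if s > 0, α ∈ [−π,π), and ∫_{ℝ²} |∇(e^{mθR}(h − h^{s,α}))|² dx < δ² for some δ < ε, then |α| + |s − 1| ≤ Cδ. -/

import Mathlib

open MeasureTheory Real Set

/-- The m-equivariant harmonic map profile h^{s,α}(r) = e^{αR}h(r/s). -/
noncomputable def harmonicProfile (m : ℕ) (s α : ℝ) : ℝ → Fin 3 → ℝ := fun r =>
  ![Real.cos α * (2 / ((r / s) ^ (m:ℝ) + (r / s) ^ (-(m:ℝ)))),
    Real.sin α * (2 / ((r / s) ^ (m:ℝ) + (r / s) ^ (-(m:ℝ)))),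
    ((r / s) ^ (m:ℝ) - (r / s) ^ (-(m:ℝ))) / ((r / s) ^ (m:ℝ) + (r / s) ^ (-(m:ℝ)))]

/-- Squared Ḣ¹(ℝ²) norm of the m-equivariant map e^{mθR}w(r). -/
noncomputable def equivH1normSq (m : ℕ) (w : ℝ → Fin 3 → ℝ) : ℝ :=
  2 * π * ∫ r in Set.Ioi (0:ℝ),
    ((∑ i, (deriv (fun t => w t i) r) ^ 2) +
      (m : ℝ) ^ 2 / r ^ 2 * ((w r 0) ^ 2 + (w r 1) ^ 2)) * r

namespace HPC


noncomputable def G (p x : ℝ) : ℝ := x ^ p + x ^ (-p)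
noncomputable def HH (p x : ℝ) : ℝ := 2 / G p x
noncomputable def TT (p x : ℝ) : ℝ := (x ^ p - x ^ (-p)) / G p x

variable {p x : ℝ}

lemma rpow_mul_rpow_neg (hx : 0 < x) : x ^ p * x ^ (-p) = 1 := by
  rw [← Real.rpow_add hx]; simp

lemma G_pos (hx : 0 < x) : 0 < G p x :=
  add_pos (Real.rpow_pos_of_pos hx p) (Real.rpow_pos_of_pos hx (-p))

lemma two_le_G (hx : 0 < x) : 2 ≤ G p x := by
  have h1 := rpow_mul_rpow_neg (p := p) hx
  have h2 : (0:ℝ) < x ^ (-p) := Real.rpow_pos_of_pos hx (-p)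
  have h3 := sq_nonneg (x ^ p - 1)
  unfold G
  nlinarith [mul_nonneg (sq_nonneg (x ^ p - 1)) h2.le]

lemma HH_pos (hx : 0 < x) : 0 < HH p x := div_pos two_pos (G_pos hx)

lemma HH_le_one (hx : 0 < x) : HH p x ≤ 1 := by
  rw [HH, div_le_one (G_pos hx)]; exact two_le_G hx

lemma abs_sub_le_G (hx : 0 < x) : |x ^ p - x ^ (-p)| ≤ G p x := by
  have h1 : (0:ℝ) < x ^ p := Real.rpow_pos_of_pos hx p
  have h2 : (0:ℝ) < x ^ (-p) := Real.rpow_pos_of_pos hx (-p)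
  rw [abs_le]; constructor <;> [unfold G; unfold G] <;> nlinarith

lemma hasDerivAt_G (hp : 1 ≤ p) (hx : 0 < x) :
    HasDerivAt (G p) (p * (x ^ p - x ^ (-p)) / x) x := by
  have h1 : HasDerivAt (fun y : ℝ => y ^ p) (p * x ^ (p - 1)) x :=
    Real.hasDerivAt_rpow_const (Or.inl hx.ne')
  have h2 : HasDerivAt (fun y : ℝ => y ^ (-p)) (-p * x ^ (-p - 1)) x :=
    Real.hasDerivAt_rpow_const (Or.inl hx.ne')
  have := h1.add h2
  refine this.congr_deriv ?_
  rw [Real.rpow_sub hx, Real.rpow_sub hx, Real.rpow_one]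
  field_simp
  ring

lemma hasDerivAt_HH (hp : 1 ≤ p) (hx : 0 < x) :
    HasDerivAt (HH p) (-(2 * p * (x ^ p - x ^ (-p))) / (x * G p x ^ 2)) x := by
  have hG := G_pos (p := p) hx
  have := (hasDerivAt_const x (2:ℝ)).div (hasDerivAt_G hp hx) hG.ne'
  refine this.congr_deriv ?_
  field_simp
  ring

lemma hasDerivAt_TT (hp : 1 ≤ p) (hx : 0 < x) :
    HasDerivAt (TT p) (4 * p / (x * G p x ^ 2)) x := by
  have hG := G_pos (p := p) hx
  have h1 : HasDerivAt (fun y : ℝ => y ^ p) (p * x ^ (p - 1)) x :=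
    Real.hasDerivAt_rpow_const (Or.inl hx.ne')
  have h2 : HasDerivAt (fun y : ℝ => y ^ (-p)) (-p * x ^ (-p - 1)) x :=
    Real.hasDerivAt_rpow_const (Or.inl hx.ne')
  have hD : HasDerivAt (fun y : ℝ => y ^ p - y ^ (-p)) (p * G p x / x) x := by
    have := h1.sub h2
    refine this.congr_deriv ?_
    rw [Real.rpow_sub hx, Real.rpow_sub hx, Real.rpow_one, G]
    field_simp; ring
  have := hD.div (hasDerivAt_G hp hx) hG.ne'
  refine this.congr_deriv ?_
  have hone := rpow_mul_rpow_neg (p := p) hx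
  have hGd : G p x = x ^ p + x ^ (-p) := rfl
  field_simp
  rw [hGd]
  linear_combination 4 * hone

variable {u v s σ r α : ℝ}


noncomputable def nu (p σ r : ℝ) : ℝ := min ((r/σ) ^ p) ((r/σ) ^ (-p))



-- nu basic facts
lemma nu_pos (hσ : 0 < σ) (hr : 0 < r) : 0 < nu p σ r :=
  lt_min (Real.rpow_pos_of_pos (div_pos hr hσ) p) (Real.rpow_pos_of_pos (div_pos hr hσ) (-p))

lemma nu_le_one (hσ : 0 < σ) (hr : 0 < r) : nu p σ r ≤ 1 := by
  have hx : 0 < r / σ := div_pos hr hσ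
  have h1 := rpow_mul_rpow_neg (p := p) hx
  have ha : (0:ℝ) < (r/σ) ^ p := Real.rpow_pos_of_pos hx p
  have hb : (0:ℝ) < (r/σ) ^ (-p) := Real.rpow_pos_of_pos hx (-p)
  rcases le_total ((r/σ) ^ p) ((r/σ) ^ (-p)) with h | h
  · have : nu p σ r = (r/σ)^p := min_eq_left h
    rw [this]; nlinarith
  · have : nu p σ r = (r/σ)^(-p) := min_eq_right h
    rw [this]; nlinarith

lemma inv_G_le_nu (hσ : 0 < σ) (hr : 0 < r) : 1 / G p (r/σ) ≤ nu p σ r := by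
  have hx : 0 < r / σ := div_pos hr hσ
  have h1 := rpow_mul_rpow_neg (p := p) hx
  have ha : (0:ℝ) < (r/σ) ^ p := Real.rpow_pos_of_pos hx p
  have hb : (0:ℝ) < (r/σ) ^ (-p) := Real.rpow_pos_of_pos hx (-p)
  have hG := G_pos (p := p) hx
  apply le_min
  · rw [div_le_iff₀ hG]
    have : G p (r/σ) = (r/σ)^p + (r/σ)^(-p) := rfl
    nlinarith
  · rw [div_le_iff₀ hG]
    have : G p (r/σ) = (r/σ)^p + (r/σ)^(-p) := rfl
    nlinarith

lemma HH_le_nu (hσ : 0 < σ) (hr : 0 < r) : HH p (r/σ) ≤ 2 * nu p σ r := by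
  have h := inv_G_le_nu (p := p) hσ hr
  have hG := G_pos (p := p) (div_pos hr hσ)
  have : HH p (r/σ) = 2 * (1 / G p (r/σ)) := by rw [HH]; ring
  rw [this]; linarith

-- monotonicity of G on [1, ∞)
lemma G_mono (hp : 1 ≤ p) (hu : 1 ≤ u) (huv : u ≤ v) : G p u ≤ G p v := by
  have hu0 : (0:ℝ) < u := lt_of_lt_of_le one_pos hu
  have hv0 : (0:ℝ) < v := lt_of_lt_of_le hu0 huv
  have ha1 : 1 ≤ u ^ p := Real.one_le_rpow hu (by linarith)
  have hab : u ^ p ≤ v ^ p := Real.rpow_le_rpow hu0.le huv (by linarith)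
  have hua : u ^ (-p) = (u ^ p)⁻¹ := by rw [Real.rpow_neg hu0.le]
  have hvb : v ^ (-p) = (v ^ p)⁻¹ := by rw [Real.rpow_neg hv0.le]
  set a := u ^ p
  set b := v ^ p
  have ha0 : 0 < a := Real.rpow_pos_of_pos hu0 p
  have hb0 : 0 < b := Real.rpow_pos_of_pos hv0 p
  have key : a⁻¹ - b⁻¹ = (b - a) * (a⁻¹ * b⁻¹) := by field_simp
  have huv2 : a⁻¹ * b⁻¹ ≤ 1 := by
    rw [← mul_inv]
    have : 1 ≤ a * b := by nlinarith
    exact inv_le_one_of_one_le₀ this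
  have : G p v - G p u = (b - a) * (1 - a⁻¹ * b⁻¹) := by
    unfold G; rw [hua, hvb]; linarith [key]
  nlinarith [mul_nonneg (sub_nonneg.2 hab) (sub_nonneg.2 huv2)]

lemma G_strict (hp : 1 ≤ p) (hu : 1 ≤ u) (huv : u < v) : G p u < G p v := by
  have hu0 : (0:ℝ) < u := lt_of_lt_of_le one_pos hu
  have hv0 : (0:ℝ) < v := lt_trans hu0 huv
  have ha1 : 1 ≤ u ^ p := Real.one_le_rpow hu (by linarith)
  have hb1 : 1 < v ^ p := by
    have : 1 < v := lt_of_le_of_lt hu huv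
    calc (1:ℝ) = 1 ^ p := (Real.one_rpow p).symm
    _ < v ^ p := Real.rpow_lt_rpow zero_le_one this (by linarith)
  have hab : u ^ p < v ^ p := Real.rpow_lt_rpow hu0.le huv (by linarith)
  have hua : u ^ (-p) = (u ^ p)⁻¹ := by rw [Real.rpow_neg hu0.le]
  have hvb : v ^ (-p) = (v ^ p)⁻¹ := by rw [Real.rpow_neg hv0.le]
  set a := u ^ p
  set b := v ^ p
  have ha0 : 0 < a := Real.rpow_pos_of_pos hu0 p
  have hb0 : 0 < b := Real.rpow_pos_of_pos hv0 p
  have key : a⁻¹ - b⁻¹ = (b - a) * (a⁻¹ * b⁻¹) := by field_simp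
  have huv2 : a⁻¹ * b⁻¹ < 1 := by
    rw [← mul_inv]
    have : 1 < a * b := by nlinarith
    exact inv_lt_one_of_one_lt₀ this
  have hdiff : G p v - G p u = (b - a) * (1 - a⁻¹ * b⁻¹) := by
    unfold G; rw [hua, hvb]; linarith [key]
  nlinarith [mul_pos (sub_pos.2 hab) (sub_pos.2 huv2)]

lemma HH_anti (hp : 1 ≤ p) (hu : 1 ≤ u) (huv : u ≤ v) : HH p v ≤ HH p u := by
  have hu0 : (0:ℝ) < u := lt_of_lt_of_le one_pos hu
  exact div_le_div_of_nonneg_left (by norm_num) (G_pos hu0) (G_mono hp hu huv)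

lemma HH_strict_anti (hp : 1 ≤ p) (hu : 1 ≤ u) (huv : u < v) : HH p v < HH p u := by
  have hu0 : (0:ℝ) < u := lt_of_lt_of_le one_pos hu
  exact div_lt_div_of_pos_left (by norm_num) (G_pos hu0) (G_strict hp hu huv)

lemma HH_inv (hx : 0 < x) : HH p x⁻¹ = HH p x := by
  unfold HH G
  rw [Real.inv_rpow hx.le, Real.inv_rpow hx.le, ← Real.rpow_neg hx.le, ← Real.rpow_neg hx.le,
    neg_neg, add_comm]




-- v^p - u^p ≥ v - u for 1 ≤ u ≤ v, 1 ≤ p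
lemma rpow_gap (hp : 1 ≤ p) (hu : 1 ≤ u) (huv : u ≤ v) : v - u ≤ v ^ p - u ^ p := by
  have hu0 : (0:ℝ) < u := lt_of_lt_of_le one_pos hu
  have hv0 : (0:ℝ) < v := lt_of_lt_of_le hu0 huv
  have hq : 1 ≤ v / u := (one_le_div hu0).2 huv
  have hA : u ≤ u ^ p := by
    calc u = u ^ (1:ℝ) := (Real.rpow_one u).symm
    _ ≤ u ^ p := Real.rpow_le_rpow_of_exponent_le hu hp
  have hB : v / u ≤ (v/u) ^ p := by
    calc v/u = (v/u) ^ (1:ℝ) := (Real.rpow_one _).symm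
    _ ≤ (v/u) ^ p := Real.rpow_le_rpow_of_exponent_le hq hp
  have hmul : v ^ p = u ^ p * (v/u) ^ p := by
    rw [← Real.mul_rpow hu0.le (by positivity)]
    congr 1
    field_simp
  have hA1 : 1 ≤ u ^ p := le_trans hu hA
  have hB1 : 1 ≤ (v/u) ^ p := le_trans hq hB
  have hfield : u * (v/u) = v := by field_simp
  nlinarith [mul_nonneg (sub_nonneg.2 hA) (sub_nonneg.2 hB1),
    mul_nonneg (by linarith : (0:ℝ) ≤ u) (sub_nonneg.2 hB)]

-- 1 - cos α ≥ α²/16 for |α| ≤ π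
lemma one_sub_cos (α : ℝ) (h : |α| ≤ π) : α ^ 2 / 16 ≤ 1 - Real.cos α := by
  wlog hα : 0 ≤ α with H
  · have h' : |(-α)| ≤ π := by rwa [abs_neg]
    have := H (-α) h' (by linarith [not_le.1 hα])
    rw [Real.cos_neg] at this
    nlinarith [this]
  have hαπ : α ≤ π := (abs_le.1 h).2
  have hpi : π ≤ 3.15 := by linarith [Real.pi_lt_d2]
  rcases le_or_gt α (π/2) with hle | hgt
  · have hcos : Real.cos α = 1 - 2 * Real.sin (α/2) ^ 2 := by
      have h2 : Real.cos (2 * (α/2)) = 1 - 2 * Real.sin (α/2) ^ 2 := by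
        rw [Real.cos_two_mul]
        nlinarith [Real.sin_sq_add_cos_sq (α/2)]
      rw [← h2]; congr 1; ring
    rcases eq_or_lt_of_le hα with rfl | hpos
    · simp
    have hα2 : α ≤ 1.6 := by linarith
    have h1 : α/2 ≤ 1 := by linarith
    have h2 := Real.sin_gt_sub_cube (by linarith : 0 < α/2)
    have h3 : α/4 ≤ Real.sin (α/2) := by nlinarith [sq_nonneg α, hpos.le]
    have h4 : 0 ≤ Real.sin (α/2) := by linarith
    nlinarith
  · have hc : Real.cos α ≤ 0 := Real.cos_nonpos_of_pi_div_two_le_of_le hgt.le (by linarith)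
    nlinarith




-- assume available (proved in other parts):
lemma HH_lip (hp : 1 ≤ p) (hu : 5/4 ≤ u) (huv : u ≤ v) (hv : v ≤ 6) :
    18/25 / (G p 6)^2 * (v - u) ≤ HH p u - HH p v := by
  have hu1 : (1:ℝ) ≤ u := by linarith
  have hv1 : (1:ℝ) ≤ v := by linarith
  have hu0 : (0:ℝ) < u := by linarith
  have hv0 : (0:ℝ) < v := by linarith
  have hba := rpow_gap hp hu1 huv
  set a := u ^ p with ha_def
  set b := v ^ p with hb_def
  have ha0 : 0 < a := Real.rpow_pos_of_pos hu0 p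
  have hb0 : 0 < b := Real.rpow_pos_of_pos hv0 p
  have hab : 25/16 ≤ a * b := by
    have h1 : a * b = (u*v) ^ p := (Real.mul_rpow hu0.le hv0.le).symm
    have h2 : (25:ℝ)/16 ≤ u * v := by nlinarith
    have h3 : u*v ≤ (u*v) ^ p := by
      calc u*v = (u*v) ^ (1:ℝ) := (Real.rpow_one _).symm
      _ ≤ (u*v) ^ p := Real.rpow_le_rpow_of_exponent_le (by linarith) hp
    linarith [h1 ▸ h3]
  have hinv : (a*b)⁻¹ ≤ 16/25 := by
    rw [inv_le_iff_one_le_mul₀ (by linarith)]  -- maybe wrong name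
    nlinarith
  have hua : u ^ (-p) = a⁻¹ := by rw [Real.rpow_neg hu0.le]
  have hvb : v ^ (-p) = b⁻¹ := by rw [Real.rpow_neg hv0.le]
  have key : a⁻¹ - b⁻¹ = (b - a) * (a*b)⁻¹ := by field_simp
  have hGdiff : G p v - G p u = (b - a) * (1 - (a*b)⁻¹) := by
    unfold G; rw [hua, hvb]; linarith [key]
  have hG1 : 9/25 * (v - u) ≤ G p v - G p u := by
    rw [hGdiff]
    have hba2 : 0 ≤ b - a := by linarith
    nlinarith [mul_nonneg hba2 (by positivity : (0:ℝ) ≤ (a*b)⁻¹)]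
  have hGu := G_pos (p := p) hu0
  have hGv := G_pos (p := p) hv0
  have hG6 := G_pos (p := p) (show (0:ℝ) < 6 by norm_num)
  have hu6 : G p u ≤ G p 6 := G_mono hp hu1 (by linarith)
  have hv6 : G p v ≤ G p 6 := G_mono hp hv1 hv
  have hHH : HH p u - HH p v = 2 * (G p v - G p u) / (G p u * G p v) := by
    unfold HH; field_simp
  rw [hHH]
  have h2 : (0:ℝ) ≤ 2 * (G p v - G p u) := by nlinarith
  calc 18/25 / (G p 6)^2 * (v - u) = 18/25 * (v - u) / (G p 6)^2 := by ring
  _ ≤ 2 * (G p v - G p u) / (G p u * G p v) := by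
      apply div_le_div₀ h2 (by linarith) (by positivity) (by nlinarith)



lemma step1 (hp : 1 ≤ p) (hs : 0 < s) (hs' : s ≤ 1/2 ∨ 2 ≤ s)
    (hr1 : 1 ≤ r) (hr2 : r ≤ 9/8) :
    HH p (9/8) - HH p (16/9) ≤ HH p r - HH p (r/s) := by
  have h1 : HH p (9/8) ≤ HH p r := HH_anti hp hr1 hr2
  have h2 : HH p (r/s) ≤ HH p (16/9) := by
    rcases hs' with h | h
    · exact HH_anti hp (by norm_num) (by rw [le_div_iff₀ hs]; nlinarith)
    · have hrs : (0:ℝ) < r / s := div_pos (by linarith) hs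
      have : HH p (r/s) = HH p (s/r) := by
        rw [← HH_inv hrs, inv_div]
      rw [this]
      exact HH_anti hp (by norm_num) (by rw [le_div_iff₀ (by linarith : (0:ℝ) < r)]; nlinarith)
  linarith

lemma kappa_pos (hp : 1 ≤ p) : 0 < HH p (9/8) - HH p (16/9) := by
  have := HH_strict_anti (p := p) hp (show (1:ℝ) ≤ 9/8 by norm_num) (show (9:ℝ)/8 < 16/9 by norm_num)
  linarith

-- Step 2 pointwise bound
set_option maxHeartbeats 1000000 in
lemma step2 (hp : 1 ≤ p) (hs1 : 1/2 ≤ s) (hs2 : s ≤ 2) (hα : |α| ≤ π)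
    (hr1 : 5/2 ≤ r) (hr2 : r ≤ 3) :
    (18/25 / (G p 6)^2)^2 * (s-1)^2 + HH p 3 * HH p 6 / 8 * α^2 ≤
      (HH p r - Real.cos α * HH p (r/s))^2 + (Real.sin α * HH p (r/s))^2 := by
  have hs0 : (0:ℝ) < s := by linarith
  have hr0 : (0:ℝ) < r := by linarith
  have hx0 : (0:ℝ) < r/s := div_pos hr0 hs0
  have hx1 : 5/4 ≤ r/s := by rw [le_div_iff₀ hs0]; nlinarith
  have hx2 : r/s ≤ 6 := by rw [div_le_iff₀ hs0]; nlinarith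
  set A := HH p r with hA
  set B := HH p (r/s) with hB
  have hA0 : 0 < A := HH_pos hr0
  have hB0 : 0 < B := HH_pos hx0
  have hid : (A - Real.cos α * B)^2 + (Real.sin α * B)^2
      = (A - B)^2 + 2*(1 - Real.cos α)*(A*B) := by
    linear_combination B^2 * (Real.sin_sq_add_cos_sq α)
  rw [hid]
  set L := 18/25 / (G p 6)^2 with hL
  have hL0 : 0 < L := by
    have := G_pos (p := p) (show (0:ℝ) < 6 by norm_num)
    positivity
  -- |A - B| ≥ L |s-1|
  have habs : L * |s - 1| ≤ |A - B| := by
    rcases le_total s 1 with h | h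
    · -- s ≤ 1, r ≤ r/s
      have huv : r ≤ r/s := by rw [le_div_iff₀ hs0]; nlinarith
      have hlip : L * (r/s - r) ≤ A - B := by
        rw [hA, hB]; exact HH_lip hp (by linarith : 5/4 ≤ r) huv hx2
      have hBA : (0:ℝ) ≤ A - B := by
        have h2 : HH p (r/s) ≤ HH p r := HH_anti hp (by linarith) huv
        rw [hA, hB]; linarith
      have hgap : s - 1 ≤ 0 := by linarith
      have hd : |s - 1| ≤ r/s - r := by
        have key : r/s - r = r*(1-s)/s := by field_simp
        rw [abs_of_nonpos hgap, key, le_div_iff₀ hs0]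
        nlinarith [mul_nonneg (by linarith : (0:ℝ) ≤ 1 - s) (by linarith : (0:ℝ) ≤ r - s)]
      rw [abs_of_nonpos hgap, abs_of_nonneg hBA]
      have h3 : L * -(s-1) ≤ L * (r/s - r) := by
        apply mul_le_mul_of_nonneg_left _ hL0.le
        rw [abs_of_nonpos hgap] at hd; linarith
      linarith
    · -- 1 ≤ s, r/s ≤ r
      have huv : r/s ≤ r := by rw [div_le_iff₀ hs0]; nlinarith
      have hlip : L * (r - r/s) ≤ B - A := by
        rw [hA, hB]; exact HH_lip hp (by linarith : 5/4 ≤ r/s) huv (by linarith : r ≤ 6)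
      have hBA : A - B ≤ (0:ℝ) := by
        have h2 : HH p r ≤ HH p (r/s) := HH_anti hp (by linarith) huv
        rw [hA, hB]; linarith
      have hgap : 0 ≤ s - 1 := by linarith
      have hd : |s - 1| ≤ r - r/s := by
        have key : r - r/s = r*(s-1)/s := by field_simp
        rw [abs_of_nonneg hgap, key, le_div_iff₀ hs0]
        nlinarith [mul_nonneg (by linarith : (0:ℝ) ≤ s - 1) (by linarith : (0:ℝ) ≤ r - s)]
      rw [abs_of_nonneg hgap, abs_of_nonpos hBA]
      have h3 : L * (s-1) ≤ L * (r - r/s) := by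
        apply mul_le_mul_of_nonneg_left _ hL0.le
        rw [abs_of_nonneg hgap] at hd; linarith
      linarith
  have hsq : L^2 * (s-1)^2 ≤ (A - B)^2 := by
    have h1 : (L * |s-1|)^2 ≤ |A - B|^2 := by
      apply pow_le_pow_left₀ (by positivity) habs
    calc L^2*(s-1)^2 = (L * |s-1|)^2 := by rw [mul_pow, sq_abs]
    _ ≤ |A-B|^2 := h1
    _ = (A-B)^2 := sq_abs _
  -- second term
  have hA3 : HH p 3 ≤ A := HH_anti hp (by linarith) hr2
  have hB6 : HH p 6 ≤ B := HH_anti hp (by linarith) hx2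
  have hc := one_sub_cos α hα
  have h36 : 0 < HH p 3 := HH_pos (by norm_num)
  have h6 : 0 < HH p 6 := HH_pos (by norm_num)
  have hterm : HH p 3 * HH p 6 / 8 * α^2 ≤ 2*(1 - Real.cos α)*(A*B) := by
    have hAB : HH p 3 * HH p 6 ≤ A * B :=
      mul_le_mul hA3 hB6 h6.le hA0.le
    have hcnn : 0 ≤ 1 - Real.cos α := by nlinarith [sq_nonneg α]
    calc HH p 3 * HH p 6 / 8 * α^2 = 2 * (α^2/16) * (HH p 3 * HH p 6) := by ring
    _ ≤ 2 * (1 - Real.cos α) * (HH p 3 * HH p 6) := by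
        apply mul_le_mul_of_nonneg_right (by linarith) (by positivity)
    _ ≤ 2 * (1 - Real.cos α) * (A * B) := by
        apply mul_le_mul_of_nonneg_left hAB (by linarith)
  linarith



noncomputable def ee (p σ r : ℝ) : ℝ := -(2*p*((r/σ)^p - (r/σ)^(-p))) / (r * G p (r/σ)^2)
noncomputable def gg (p σ r : ℝ) : ℝ := 4*p / (r * G p (r/σ)^2)

lemma hasDerivAt_HHs (hp : 1 ≤ p) (hσ : 0 < σ) (hr : 0 < r) :
    HasDerivAt (fun t => HH p (t/σ)) (ee p σ r) r := by
  have hx : 0 < r/σ := div_pos hr hσ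
  have h := (hasDerivAt_HH hp hx).comp r ((hasDerivAt_id r).div_const σ)
  refine h.congr_deriv ?_
  have hG := G_pos (p := p) hx
  unfold ee
  field_simp

lemma hasDerivAt_TTs (hp : 1 ≤ p) (hσ : 0 < σ) (hr : 0 < r) :
    HasDerivAt (fun t => TT p (t/σ)) (gg p σ r) r := by
  have hx : 0 < r/σ := div_pos hr hσ
  have h := (hasDerivAt_TT hp hx).comp r ((hasDerivAt_id r).div_const σ)
  refine h.congr_deriv ?_
  have hG := G_pos (p := p) hx
  unfold gg
  field_simp

lemma abs_ee_le (hp : 1 ≤ p) (hσ : 0 < σ) (hr : 0 < r) :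
    |ee p σ r| ≤ 2*p*nu p σ r / r := by
  have hx : 0 < r/σ := div_pos hr hσ
  have hG := G_pos (p := p) hx
  have hG2 := two_le_G (p := p) hx
  have hD := abs_sub_le_G (p := p) hx
  have hnu := inv_G_le_nu (p := p) hσ hr
  have hp0 : 0 < p := by linarith
  have h1 : |ee p σ r| = 2*p*|(r/σ)^p - (r/σ)^(-p)| / (r * G p (r/σ)^2) := by
    unfold ee
    rw [abs_div, abs_neg, abs_of_pos (by positivity : (0:ℝ) < r * G p (r/σ)^2)]
    rw [abs_mul, abs_of_pos (by positivity : (0:ℝ) < 2*p)]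
  rw [h1]
  calc 2*p*|(r/σ)^p - (r/σ)^(-p)| / (r * G p (r/σ)^2)
      ≤ 2*p*G p (r/σ) / (r * G p (r/σ)^2) := by gcongr
    _ = 2*p * (1 / G p (r/σ)) / r := by field_simp
    _ ≤ 2*p * nu p σ r / r := by gcongr

lemma gg_le (hp : 1 ≤ p) (hσ : 0 < σ) (hr : 0 < r) :
    gg p σ r ≤ 2*p*nu p σ r / r := by
  have hx : 0 < r/σ := div_pos hr hσ
  have hG := G_pos (p := p) hx
  have hG2 := two_le_G (p := p) hx
  have hnu := inv_G_le_nu (p := p) hσ hr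
  have hp0 : 0 < p := by linarith
  unfold gg
  calc 4*p / (r * G p (r/σ)^2) = 2*p * (2 / G p (r/σ)) * (1/G p (r/σ)) / r := by
        field_simp; ring
    _ ≤ 2*p * 1 * nu p σ r / r := by
        have h1 : 2 / G p (r/σ) ≤ 1 := by rw [div_le_one hG]; exact hG2
        have h2 : (0:ℝ) < 1 / G p (r/σ) := by positivity
        gcongr
    _ = 2*p * nu p σ r / r := by ring

lemma gg_pos (hp : 1 ≤ p) (hσ : 0 < σ) (hr : 0 < r) : 0 < gg p σ r := by
  have hx : 0 < r/σ := div_pos hr hσ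
  have hG := G_pos (p := p) hx
  have hp0 : 0 < p := by linarith
  unfold gg
  positivity


lemma nu_sq_integrable (hp : 1 ≤ p) (hσ : 0 < σ) :
    IntegrableOn (fun r => nu p σ r^2 / r) (Ioi (0:ℝ)) := by
  have hp0 : 0 < p := by linarith
  have hmeas : Measurable (fun r : ℝ => nu p σ r^2 / r) := by
    apply Measurable.div _ measurable_id
    apply Measurable.pow_const
    exact Measurable.min ((measurable_id.div_const σ).pow_const p)
      ((measurable_id.div_const σ).pow_const (-p))
  rw [← Ioc_union_Ioi_eq_Ioi hσ.le]
  apply IntegrableOn.union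
  · -- Ioc 0 σ
    have hmaj : IntegrableOn (fun r : ℝ => ((σ^p)⁻¹)^2 * r^(2*p - 1)) (Ioc 0 σ) := by
      have h := intervalIntegral.intervalIntegrable_rpow' (a := 0) (b := σ)
        (r := 2*p-1) (by linarith)
      rw [intervalIntegrable_iff_integrableOn_Ioc_of_le hσ.le] at h
      exact h.const_mul _
    apply Integrable.mono' hmaj (hmeas.aestronglyMeasurable.restrict)
    rw [ae_restrict_iff' measurableSet_Ioc]
    refine ae_of_all _ (fun r hr => ?_)
    obtain ⟨hr0, hrσ⟩ := hr
    have hnu1 : nu p σ r ≤ (r/σ)^p := min_le_left _ _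
    have hnu0 : 0 ≤ nu p σ r := (nu_pos hσ hr0).le
    have hx : (r/σ)^p = r^p * (σ^p)⁻¹ := by
      rw [Real.div_rpow hr0.le hσ.le]; ring
    have hsq : nu p σ r^2 ≤ (r^p)^2 * ((σ^p)⁻¹)^2 := by
      calc nu p σ r^2 ≤ ((r/σ)^p)^2 := pow_le_pow_left₀ hnu0 hnu1 2
      _ = (r^p)^2 * ((σ^p)⁻¹)^2 := by rw [hx]; ring
    have hrp : (r^p)^2 = r^(2*p-1) * r := by
      have h1 : (r^p)^2 = r^(p*2) := by
        rw [← Real.rpow_natCast (r^p) 2, ← Real.rpow_mul hr0.le]; norm_num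
      have h2 : r^(2*p-1)*r = r^(p*2) := by
        calc r^(2*p-1)*r = r^(2*p-1)*r^(1:ℝ) := by rw [Real.rpow_one]
        _ = r^(2*p-1+1) := (Real.rpow_add hr0 _ _).symm
        _ = r^(p*2) := by ring_nf
      rw [h1, h2]
    rw [Real.norm_eq_abs, abs_of_nonneg (by positivity)]
    rw [div_le_iff₀ hr0]
    calc nu p σ r^2 ≤ (r^p)^2 * ((σ^p)⁻¹)^2 := hsq
    _ = ((σ^p)⁻¹)^2 * r^(2*p-1) * r := by rw [hrp]; ring
  · -- Ioi σ
    have hmaj : IntegrableOn (fun r : ℝ => (σ^p)^2 * r^(-(2*p) - 1)) (Ioi σ) := by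
      exact (integrableOn_Ioi_rpow_of_lt (by linarith) hσ).const_mul _
    apply Integrable.mono' hmaj (hmeas.aestronglyMeasurable.restrict)
    rw [ae_restrict_iff' measurableSet_Ioi]
    refine ae_of_all _ (fun r hr => ?_)
    have hr0 : (0:ℝ) < r := lt_trans hσ hr
    have hnu1 : nu p σ r ≤ (r/σ)^(-p) := min_le_right _ _
    have hnu0 : 0 ≤ nu p σ r := (nu_pos hσ hr0).le
    have hx : (r/σ)^(-p) = r^(-p) * σ^p := by
      rw [Real.rpow_neg (by positivity), Real.div_rpow hr0.le hσ.le,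
        Real.rpow_neg hr0.le]
      field_simp
    have hsq : nu p σ r^2 ≤ (r^(-p))^2 * (σ^p)^2 := by
      calc nu p σ r^2 ≤ ((r/σ)^(-p))^2 := pow_le_pow_left₀ hnu0 hnu1 2
      _ = (r^(-p))^2 * (σ^p)^2 := by rw [hx]; ring
    have hrp : (r^(-p))^2 = r^(-(2*p)-1) * r := by
      have h1 : (r^(-p))^2 = r^(-p*2) := by
        rw [← Real.rpow_natCast (r^(-p)) 2, ← Real.rpow_mul hr0.le]; norm_num
      have h2 : r^(-(2*p)-1)*r = r^(-p*2) := by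
        calc r^(-(2*p)-1)*r = r^(-(2*p)-1)*r^(1:ℝ) := by rw [Real.rpow_one]
        _ = r^(-(2*p)-1+1) := (Real.rpow_add hr0 _ _).symm
        _ = r^(-p*2) := by ring_nf
      rw [h1, h2]
    rw [Real.norm_eq_abs, abs_of_nonneg (by positivity)]
    rw [div_le_iff₀ hr0]
    calc nu p σ r^2 ≤ (r^(-p))^2 * (σ^p)^2 := hsq
    _ = (σ^p)^2 * r^(-(2*p)-1) * r := by rw [hrp]; ring

lemma maj_integrable (hp : 1 ≤ p) (hs : 0 < s) :
    IntegrableOn (fun r => 40*p^2*(nu p 1 r^2 + nu p s r^2)/r) (Ioi (0:ℝ)) := by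
  have h1 := nu_sq_integrable (p := p) hp one_pos
  have h2 := nu_sq_integrable (p := p) hp hs
  have h3 := (h1.add h2).const_mul (40*p^2)
  apply IntegrableOn.congr_fun h3 ?_ measurableSet_Ioi
  intro r _
  simp only [Pi.add_apply]
  rw [← add_div, mul_div_assoc]

noncomputable def Ffun (p s α : ℝ) : ℝ → ℝ := fun r =>
  ((deriv (fun t => Real.cos 0 * HH p (t/1) - Real.cos α * HH p (t/s)) r)^2 +
   (deriv (fun t => Real.sin 0 * HH p (t/1) - Real.sin α * HH p (t/s)) r)^2 +
   (deriv (fun t => TT p (t/1) - TT p (t/s)) r)^2 +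
   p^2/r^2*((Real.cos 0 * HH p (r/1) - Real.cos α * HH p (r/s))^2 +
            (Real.sin 0 * HH p (r/1) - Real.sin α * HH p (r/s))^2)) * r

lemma Ffun_nonneg (r : ℝ) (hr : 0 ≤ r) : 0 ≤ Ffun p s α r := by
  unfold Ffun
  have h : (0:ℝ) ≤ p^2/r^2 := by positivity
  positivity

lemma Ffun_measurable : Measurable (Ffun p s α) := by
  unfold Ffun
  have hHH : ∀ σ : ℝ, Measurable (fun r : ℝ => HH p (r/σ)) := by
    intro σ
    apply Measurable.div measurable_const
    exact ((measurable_id.div_const σ).pow_const p).add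
      ((measurable_id.div_const σ).pow_const (-p))
  apply Measurable.mul _ measurable_id
  apply Measurable.add
  apply Measurable.add
  apply Measurable.add
  · exact (measurable_deriv _).pow_const 2
  · exact (measurable_deriv _).pow_const 2
  · exact (measurable_deriv _).pow_const 2
  · apply Measurable.mul
    · exact measurable_const.div (measurable_id.pow_const 2)
    · apply Measurable.add
      · exact (((hHH 1).const_mul _).sub ((hHH s).const_mul _)).pow_const 2
      · exact (((hHH 1).const_mul _).sub ((hHH s).const_mul _)).pow_const 2

lemma deriv0_eq (hp : 1 ≤ p) (hs : 0 < s) (hr : 0 < r) (c c' : ℝ) :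
    deriv (fun t => c * HH p (t/1) - c' * HH p (t/s)) r
      = c * ee p 1 r - c' * ee p s r :=
  (((hasDerivAt_HHs hp one_pos hr).const_mul c).sub
    ((hasDerivAt_HHs hp hs hr).const_mul c')).deriv

lemma deriv2_eq (hp : 1 ≤ p) (hs : 0 < s) (hr : 0 < r) :
    deriv (fun t => TT p (t/1) - TT p (t/s)) r = gg p 1 r - gg p s r :=
  ((hasDerivAt_TTs hp one_pos hr).sub (hasDerivAt_TTs hp hs hr)).deriv

lemma sq_comb_le {c c' E1 Es b1 bs : ℝ} (hc : |c| ≤ 1) (hc' : |c'| ≤ 1)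
    (h1 : |E1| ≤ b1) (h2 : |Es| ≤ bs) :
    (c * E1 - c' * Es)^2 ≤ 2*b1^2 + 2*bs^2 := by
  have h3 : |c * E1 - c' * Es| ≤ b1 + bs := by
    calc |c * E1 - c' * Es| ≤ |c * E1| + |c' * Es| := abs_sub _ _
    _ = |c| * |E1| + |c'| * |Es| := by rw [abs_mul, abs_mul]
    _ ≤ 1 * b1 + 1 * bs := by
        apply add_le_add
        · exact mul_le_mul hc h1 (abs_nonneg _) zero_le_one
        · exact mul_le_mul hc' h2 (abs_nonneg _) zero_le_one
    _ = b1 + bs := by ring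
  have h0 : (0:ℝ) ≤ b1 + bs := le_trans (abs_nonneg _) h3
  calc (c * E1 - c' * Es)^2 = |c * E1 - c' * Es|^2 := (sq_abs _).symm
  _ ≤ (b1 + bs)^2 := pow_le_pow_left₀ (abs_nonneg _) h3 2
  _ ≤ 2*b1^2 + 2*bs^2 := by nlinarith [sq_nonneg (b1 - bs)]

set_option maxHeartbeats 1000000 in
lemma Ffun_le_maj (hp : 1 ≤ p) (hs : 0 < s) (hr : 0 < r) :
    Ffun p s α r ≤ 40*p^2*(nu p 1 r^2 + nu p s r^2)/r := by
  have hp0 : 0 < p := by linarith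
  have hN1 := nu_pos (p := p) one_pos hr
  have hNs := nu_pos (p := p) hs hr
  set N1 := nu p 1 r with hN1d
  set Ns := nu p s r with hNsd
  have hb1 : |ee p 1 r| ≤ 2*p*N1/r := abs_ee_le hp one_pos hr
  have hbs : |ee p s r| ≤ 2*p*Ns/r := abs_ee_le hp hs hr
  have hg1 : |gg p 1 r| ≤ 2*p*N1/r := by
    rw [abs_of_pos (gg_pos hp one_pos hr)]; exact gg_le hp one_pos hr
  have hgs : |gg p s r| ≤ 2*p*Ns/r := by
    rw [abs_of_pos (gg_pos hp hs hr)]; exact gg_le hp hs hr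
  have hH1 : |Real.cos 0 * HH p (r/1)| ≤ 2*N1 := by
    rw [abs_mul, Real.cos_zero, abs_one, one_mul,
      abs_of_pos (HH_pos (by positivity))]
    exact HH_le_nu one_pos hr
  have hHs : HH p (r/s) ≤ 2*Ns := HH_le_nu hs hr
  have hHs0 : 0 < HH p (r/s) := HH_pos (by positivity)
  -- squares of derivatives
  have hd0 : (deriv (fun t => Real.cos 0 * HH p (t/1) - Real.cos α * HH p (t/s)) r)^2
      ≤ 2*(2*p*N1/r)^2 + 2*(2*p*Ns/r)^2 := by
    rw [deriv0_eq hp hs hr]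
    exact sq_comb_le (by rw [Real.cos_zero, abs_one]) (abs_cos_le_one α) hb1 hbs
  have hd1 : (deriv (fun t => Real.sin 0 * HH p (t/1) - Real.sin α * HH p (t/s)) r)^2
      ≤ 2*(2*p*N1/r)^2 + 2*(2*p*Ns/r)^2 := by
    have := (((hasDerivAt_HHs (p := p) hp one_pos hr).const_mul (Real.sin 0)).sub
      ((hasDerivAt_HHs (p := p) hp hs hr).const_mul (Real.sin α))).deriv
    rw [show (fun t => Real.sin 0 * HH p (t/1) - Real.sin α * HH p (t/s)) = ((fun y => Real.sin 0 * HH p (y/1)) - fun y => Real.sin α * HH p (y/s)) from rfl, this]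
    exact sq_comb_le (by rw [Real.sin_zero, abs_zero]; norm_num) (abs_sin_le_one α) hb1 hbs
  have hd2 : (deriv (fun t => TT p (t/1) - TT p (t/s)) r)^2
      ≤ 2*(2*p*N1/r)^2 + 2*(2*p*Ns/r)^2 := by
    rw [deriv2_eq hp hs hr]
    have h := sq_comb_le (c := (1:ℝ)) (c' := (1:ℝ)) (le_of_eq abs_one)
      (le_of_eq abs_one) hg1 hgs
    calc (gg p 1 r - gg p s r)^2 = ((1:ℝ) * gg p 1 r - 1 * gg p s r)^2 := by ring
    _ ≤ 2*(2*p*N1/r)^2 + 2*(2*p*Ns/r)^2 := h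
  have hw0 : (Real.cos 0 * HH p (r/1) - Real.cos α * HH p (r/s))^2
      ≤ 2*(2*N1)^2 + 2*(2*Ns)^2 := by
    apply sq_comb_le (by rw [Real.cos_zero, abs_one]) (abs_cos_le_one α)
    · rw [abs_of_pos (HH_pos (by positivity))]; exact HH_le_nu one_pos hr
    · rw [abs_of_pos hHs0]; exact hHs
  have hw1 : (Real.sin 0 * HH p (r/1) - Real.sin α * HH p (r/s))^2
      ≤ 2*(2*N1)^2 + 2*(2*Ns)^2 := by
    apply sq_comb_le (by rw [Real.sin_zero, abs_zero]; norm_num) (abs_sin_le_one α)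
    · rw [abs_of_pos (HH_pos (by positivity))]; exact HH_le_nu one_pos hr
    · rw [abs_of_pos hHs0]; exact hHs
  have hwsum : p^2/r^2 * ((Real.cos 0 * HH p (r/1) - Real.cos α * HH p (r/s))^2
      + (Real.sin 0 * HH p (r/1) - Real.sin α * HH p (r/s))^2)
      ≤ p^2/r^2 * (16*N1^2 + 16*Ns^2) := by
    apply mul_le_mul_of_nonneg_left _ (by positivity)
    nlinarith [hw0, hw1]
  have hB : (deriv (fun t => Real.cos 0 * HH p (t/1) - Real.cos α * HH p (t/s)) r)^2 +
      (deriv (fun t => Real.sin 0 * HH p (t/1) - Real.sin α * HH p (t/s)) r)^2 +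
      (deriv (fun t => TT p (t/1) - TT p (t/s)) r)^2 +
      p^2/r^2*((Real.cos 0 * HH p (r/1) - Real.cos α * HH p (r/s))^2 +
        (Real.sin 0 * HH p (r/1) - Real.sin α * HH p (r/s))^2)
      ≤ 40*p^2*(N1^2+Ns^2)/r^2 := by
    have e0 : 2*(2*p*N1/r)^2 + 2*(2*p*Ns/r)^2 = 8*(p^2*N1^2/r^2) + 8*(p^2*Ns^2/r^2) := by ring
    have egoal : 40*p^2*(N1^2+Ns^2)/r^2 = 40*(p^2*N1^2/r^2) + 40*(p^2*Ns^2/r^2) := by ring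
    have ew : p^2/r^2 * (16*N1^2 + 16*Ns^2) = 16*(p^2*N1^2/r^2) + 16*(p^2*Ns^2/r^2) := by ring
    rw [egoal]
    rw [e0] at hd0 hd1 hd2
    rw [ew] at hwsum
    linarith
  unfold Ffun
  refine le_trans (mul_le_mul_of_nonneg_right hB hr.le) (le_of_eq ?_)
  rw [div_mul_eq_mul_div, div_eq_div_iff (by positivity) (by positivity)]
  ring

lemma Ffun_integrableOn (hp : 1 ≤ p) (hs : 0 < s) :
    IntegrableOn (Ffun p s α) (Ioi (0:ℝ)) := by
  apply Integrable.mono' (maj_integrable hp hs)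
    ((Ffun_measurable (p := p) (s := s) (α := α)).aestronglyMeasurable.restrict)
  rw [ae_restrict_iff' measurableSet_Ioi]
  refine ae_of_all _ (fun r hr => ?_)
  have hr0 : (0:ℝ) < r := hr
  rw [Real.norm_eq_abs, abs_of_nonneg (Ffun_nonneg r hr0.le)]
  exact Ffun_le_maj hp hs hr0


end HPC

namespace HPC

lemma wsq_ge (A B : ℝ) (hA : 0 ≤ A) (hB : 0 ≤ B) (α : ℝ) :
    (A - B)^2 ≤ (A - Real.cos α * B)^2 + (Real.sin α * B)^2 := by
  have hid : (A - Real.cos α * B)^2 + (Real.sin α * B)^2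
      = (A - B)^2 + 2*(1 - Real.cos α)*(A*B) := by
    linear_combination B^2 * (Real.sin_sq_add_cos_sq α)
  have hc : Real.cos α ≤ 1 := Real.cos_le_one α
  nlinarith [mul_nonneg (mul_nonneg hA hB) (by linarith : (0:ℝ) ≤ 1 - Real.cos α)]

lemma Ffun_ge_w {p s r α : ℝ} (hr : 0 < r) :
    (p^2/r^2*((HH p r - Real.cos α * HH p (r/s))^2 + (Real.sin α * HH p (r/s))^2)) * r
      ≤ Ffun p s α r := by
  unfold Ffun
  apply mul_le_mul_of_nonneg_right _ hr.le
  have e0 : Real.cos 0 * HH p (r/1) = HH p r := by rw [Real.cos_zero, one_mul, div_one]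
  have e1 : Real.sin 0 * HH p (r/1) = (0:ℝ) := by rw [Real.sin_zero, zero_mul]
  rw [e0, e1, zero_sub, neg_sq]
  have h0 := sq_nonneg (deriv (fun t => Real.cos 0 * HH p (t/1) - Real.cos α * HH p (t/s)) r)
  have h1 := sq_nonneg (deriv (fun t => Real.sin 0 * HH p (t/1) - Real.sin α * HH p (t/s)) r)
  have h2 := sq_nonneg (deriv (fun t => TT p (t/1) - TT p (t/s)) r)
  linarith

lemma integral_lower {F : ℝ → ℝ} (hInt : IntegrableOn F (Ioi (0:ℝ)))
    (hpos : ∀ r ∈ Ioi (0:ℝ), 0 ≤ F r) {a b c : ℝ} (ha : 0 < a) (hab : a ≤ b)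
    (hc : ∀ r ∈ Icc a b, c ≤ F r) : c * (b - a) ≤ ∫ r in Ioi (0:ℝ), F r := by
  have hsub : Icc a b ⊆ Ioi (0:ℝ) := fun x hx => lt_of_lt_of_le ha hx.1
  have h2 : c * (b - a) ≤ ∫ r in Icc a b, F r := by
    have hci : IntegrableOn (fun _ : ℝ => c) (Icc a b) :=
      integrableOn_const (by rw [Real.volume_Icc]; exact ENNReal.ofReal_ne_top)
    have h := setIntegral_mono_on hci (hInt.mono_set hsub) measurableSet_Icc hc
    rwa [setIntegral_const, measureReal_def, Real.volume_Icc, smul_eq_mul,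
      ENNReal.toReal_ofReal (by linarith), mul_comm] at h
  have h1 : ∫ r in Icc a b, F r ≤ ∫ r in Ioi (0:ℝ), F r := by
    apply setIntegral_mono_set hInt
    · filter_upwards [ae_restrict_mem measurableSet_Ioi] with r hr using hpos r hr
    · exact HasSubset.Subset.eventuallyLE hsub
  linarith

end HPC

open HPC


set_option maxHeartbeats 2000000 in
/-- If ‖e^{mθR}(h − h^{s,α})‖_{Ḣ¹} < δ with δ small, then |α| + |s − 1| ≤ Cδ. -/
theorem harmonic_parameters_controlled (m : ℕ) (hm : 1 ≤ m) :
    ∃ ε : ℝ, 0 < ε ∧ ∃ C : ℝ, 0 < C ∧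
      ∀ s α δ : ℝ, 0 < s → -π ≤ α → α < π → 0 < δ → δ < ε →
        equivH1normSq m
          (fun r i => harmonicProfile m 1 0 r i - harmonicProfile m s α r i) < δ ^ 2 →
        |α| + |s - 1| ≤ C * δ := by
  have hp : (1:ℝ) ≤ (m:ℝ) := by exact_mod_cast hm
  have hp0 : (0:ℝ) < (m:ℝ) := by linarith
  have hκ : 0 < HH (m:ℝ) (9/8) - HH (m:ℝ) (16/9) := kappa_pos hp
  set κ := HH (m:ℝ) (9/8) - HH (m:ℝ) (16/9) with hκdef
  have hG6 : 0 < G (m:ℝ) 6 := G_pos (by norm_num)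
  have hL : (0:ℝ) < 18/25/(G (m:ℝ) 6)^2 := by positivity
  set L : ℝ := 18/25/(G (m:ℝ) 6)^2 with hLdef
  have hH3 : 0 < HH (m:ℝ) 3 := HH_pos (by norm_num)
  have hH6 : 0 < HH (m:ℝ) 6 := HH_pos (by norm_num)
  set Q : ℝ := HH (m:ℝ) 3 * HH (m:ℝ) 6 / 8 with hQdef
  have hQ : 0 < Q := by rw [hQdef]; positivity
  set c5 : ℝ := (m:ℝ)^2/3 * min (L^2) Q with hc5def
  have hc5 : 0 < c5 := mul_pos (by positivity) (lt_min (by positivity) hQ)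
  set cS1 : ℝ := (m:ℝ)^2 * κ^2 * (8/9) with hcS1def
  have hcS1 : 0 < cS1 := by rw [hcS1def]; positivity
  have hπ := Real.pi_pos
  refine ⟨Real.sqrt (2*π*(cS1*(9/8-1))), Real.sqrt_pos.2 (by positivity),
    Real.sqrt (2/(π*c5)), Real.sqrt_pos.2 (by positivity), ?_⟩
  intro s α δ hs hα1 hα2 hδ hδε hnorm
  have hαπ : |α| ≤ π := abs_le.2 ⟨hα1, hα2.le⟩
  -- rewrite the norm as the integral of Ffun
  have hkey : equivH1normSq m
      (fun r i => harmonicProfile m 1 0 r i - harmonicProfile m s α r i)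
      = 2*π*∫ r in Ioi (0:ℝ), Ffun (m:ℝ) s α r := by
    unfold equivH1normSq
    congr 1
    congr 1
    funext r
    simp only [Ffun, HH, TT, G, harmonicProfile, Fin.sum_univ_three,
      Matrix.cons_val_zero, Matrix.cons_val_one, Matrix.head_cons,
      Matrix.cons_val_two, Matrix.tail_cons]
  rw [hkey] at hnorm
  have hInt := Ffun_integrableOn (p := (m:ℝ)) (α := α) hp hs
  have hFnn : ∀ r ∈ Ioi (0:ℝ), 0 ≤ Ffun (m:ℝ) s α r :=
    fun r hr => Ffun_nonneg r (le_of_lt hr)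
  -- Step 1: s must lie in (1/2, 2)
  have hsrange : 1/2 < s ∧ s < 2 := by
    by_contra hcon
    have hout : s ≤ 1/2 ∨ 2 ≤ s := by
      rcases not_and_or.1 hcon with h | h
      · exact Or.inl (by linarith [not_lt.1 h])
      · exact Or.inr (by linarith [not_lt.1 h])
    have hlow : ∀ r ∈ Icc (1:ℝ) (9/8), cS1 ≤ Ffun (m:ℝ) s α r := by
      intro r hr
      have hr0 : (0:ℝ) < r := lt_of_lt_of_le one_pos hr.1
      have hrs0 : (0:ℝ) < r/s := div_pos hr0 hs
      have hstep := step1 hp hs hout hr.1 hr.2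
      have hwge := wsq_ge (HH (m:ℝ) r) (HH (m:ℝ) (r/s)) (HH_pos hr0).le (HH_pos hrs0).le α
      have hsq : κ^2 ≤ (HH (m:ℝ) r - HH (m:ℝ) (r/s))^2 := by
        have h' : κ ≤ HH (m:ℝ) r - HH (m:ℝ) (r/s) := le_of_eq_of_le hκdef hstep
        exact pow_le_pow_left₀ hκ.le h' 2
      have hWlow : κ^2 ≤ (HH (m:ℝ) r - Real.cos α * HH (m:ℝ) (r/s))^2
          + (Real.sin α * HH (m:ℝ) (r/s))^2 := le_trans hsq hwge
      have hcalc : cS1 ≤ ((m:ℝ)^2/r^2*((HH (m:ℝ) r - Real.cos α * HH (m:ℝ) (r/s))^2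
          + (Real.sin α * HH (m:ℝ) (r/s))^2)) * r := by
        have hstep2 : cS1 ≤ (m:ℝ)^2*κ^2*(1/r) := by
          rw [hcS1def]
          apply mul_le_mul_of_nonneg_left _ (by positivity)
          rw [le_div_iff₀ hr0]
          linarith [hr.2]
        have heq : ((m:ℝ)^2/r^2*κ^2) * r = (m:ℝ)^2*κ^2*(1/r) := by
          field_simp
        calc cS1 ≤ (m:ℝ)^2*κ^2*(1/r) := hstep2
        _ = ((m:ℝ)^2/r^2*κ^2) * r := heq.symm
        _ ≤ ((m:ℝ)^2/r^2*((HH (m:ℝ) r - Real.cos α * HH (m:ℝ) (r/s))^2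
            + (Real.sin α * HH (m:ℝ) (r/s))^2)) * r := by
          apply mul_le_mul_of_nonneg_right _ hr0.le
          exact mul_le_mul_of_nonneg_left hWlow (by positivity)
      exact le_trans hcalc (Ffun_ge_w hr0)
    have hint := integral_lower hInt hFnn one_pos (by norm_num : (1:ℝ) ≤ 9/8) hlow
    have hδ2 : δ^2 < 2*π*(cS1*(9/8-1)) := by
      have h := (Real.lt_sqrt hδ.le).1 hδε
      linarith
    have h2 : 2*π*(cS1*(9/8-1)) ≤ 2*π*∫ r in Ioi (0:ℝ), Ffun (m:ℝ) s α r := by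
      exact mul_le_mul_of_nonneg_left hint (by positivity)
    linarith
  -- Step 2
  obtain ⟨hs1, hs2⟩ := hsrange
  have hlow2 : ∀ r ∈ Icc (5/2:ℝ) 3, c5*((s-1)^2+α^2) ≤ Ffun (m:ℝ) s α r := by
    intro r hr
    have hr0 : (0:ℝ) < r := by linarith [hr.1]
    have hrs0 : (0:ℝ) < r/s := div_pos hr0 hs
    have hstep := step2 hp hs1.le hs2.le hαπ hr.1 hr.2
    rw [← hLdef, ← hQdef] at hstep
    have hW : c5*((s-1)^2+α^2) ≤ (m:ℝ)^2/3 *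
        ((HH (m:ℝ) r - Real.cos α * HH (m:ℝ) (r/s))^2 + (Real.sin α * HH (m:ℝ) (r/s))^2) := by
      have hmin : min (L^2) Q * ((s-1)^2+α^2) ≤ L^2*(s-1)^2 + Q*α^2 := by
        have h1 : min (L^2) Q ≤ L^2 := min_le_left _ _
        have h2 : min (L^2) Q ≤ Q := min_le_right _ _
        nlinarith [sq_nonneg (s-1), sq_nonneg α]
      calc c5*((s-1)^2+α^2) = (m:ℝ)^2/3 * (min (L^2) Q * ((s-1)^2+α^2)) := by
            rw [hc5def]; ring
      _ ≤ (m:ℝ)^2/3 * (L^2*(s-1)^2 + Q*α^2) :=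
            mul_le_mul_of_nonneg_left hmin (by positivity)
      _ ≤ _ := mul_le_mul_of_nonneg_left hstep (by positivity)
    have hWnn : (0:ℝ) ≤ (HH (m:ℝ) r - Real.cos α * HH (m:ℝ) (r/s))^2
        + (Real.sin α * HH (m:ℝ) (r/s))^2 := by positivity
    have hchain : (m:ℝ)^2/3 *
        ((HH (m:ℝ) r - Real.cos α * HH (m:ℝ) (r/s))^2 + (Real.sin α * HH (m:ℝ) (r/s))^2)
        ≤ ((m:ℝ)^2/r^2*((HH (m:ℝ) r - Real.cos α * HH (m:ℝ) (r/s))^2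
          + (Real.sin α * HH (m:ℝ) (r/s))^2)) * r := by
      have heq : ((m:ℝ)^2/r^2*((HH (m:ℝ) r - Real.cos α * HH (m:ℝ) (r/s))^2
          + (Real.sin α * HH (m:ℝ) (r/s))^2)) * r
          = (m:ℝ)^2/r*((HH (m:ℝ) r - Real.cos α * HH (m:ℝ) (r/s))^2
          + (Real.sin α * HH (m:ℝ) (r/s))^2) := by
        field_simp
      rw [heq]
      exact mul_le_mul_of_nonneg_right
        (div_le_div_of_nonneg_left (by positivity) hr0 hr.2) hWnn
    exact le_trans hW (le_trans hchain (Ffun_ge_w hr0))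
  have hint2 := integral_lower hInt hFnn (by norm_num : (0:ℝ) < 5/2)
    (by norm_num : (5/2:ℝ) ≤ 3) hlow2
  have hb : (s-1)^2 + α^2 ≤ δ^2/(π*c5) := by
    rw [le_div_iff₀ (by positivity)]
    have h2 : 2*π*(c5*((s-1)^2+α^2)*(3-5/2)) ≤ 2*π*∫ r in Ioi (0:ℝ), Ffun (m:ℝ) s α r :=
      mul_le_mul_of_nonneg_left hint2 (by positivity)
    nlinarith [h2, hnorm]
  have hC2 : (Real.sqrt (2/(π*c5)))^2 = 2/(π*c5) := Real.sq_sqrt (by positivity)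
  have ha2 : (|α|+|s-1|)^2 ≤ 2*((s-1)^2+α^2) := by
    nlinarith [sq_nonneg (|α|-|s-1|), sq_abs α, sq_abs (s-1), abs_nonneg α, abs_nonneg (s-1)]
  have hfin : (|α|+|s-1|)^2 ≤ (Real.sqrt (2/(π*c5))*δ)^2 := by
    rw [mul_pow, hC2]
    have : 2/(π*c5)*δ^2 = 2*(δ^2/(π*c5)) := by ring
    rw [this]
    linarith
  have hnn : (0:ℝ) ≤ |α|+|s-1| := by positivity
  have := Real.sqrt_le_sqrt hfin
  rwa [Real.sqrt_sq hnn, Real.sqrt_sq (by positivity)] at this
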